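/- There exists N₀ ∈ ℕ such that for every n ≥ N₀, all k, k' ∈ ℤ with |k|, |k'| ≤ n^{3/5}, and every ε ∈ [-1,1] with |ε| ≤ n^{-2/5}, it holds that |V(n,ε)(k) − V(n,ε)(k')| ≤ |k − k'|/√n. -/

import Mathlib

noncomputable def binPMF (n : ℕ) (ε : ℝ) (k : ℤ) : ℝ :=
  if ((n : ℤ) + k) % 2 = 0 ∧ -(n : ℤ) ≤ k ∧ k ≤ (n : ℤ) then
    (n.choose (((n : ℤ) + k) / 2).toNat : ℝ) *
      ((1 + ε) / 2) ^ (((n : ℤ) + k) / 2).toNat *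
      ((1 - ε) / 2) ^ (((n : ℤ) - k) / 2).toNat
  else 0

lemma binPMF_nonneg (n : ℕ) (ε : ℝ) (hε : ε ∈ Set.Icc (-1:ℝ) 1) (k : ℤ) :
    0 ≤ binPMF n ε k := by
  unfold binPMF
  obtain ⟨h1, h2⟩ := hε
  split
  · have a1 : (0:ℝ) ≤ (1 + ε)/2 := by linarith
    have a2 : (0:ℝ) ≤ (1 - ε)/2 := by linarith
    have a3 : (0:ℝ) ≤ (n.choose (((n : ℤ) + k) / 2).toNat : ℝ) := Nat.cast_nonneg _
    exact mul_nonneg (mul_nonneg a3 (pow_nonneg a1 _)) (pow_nonneg a2 _)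
  · exact le_rfl

lemma binPMF_zero_of_gt (n : ℕ) (ε : ℝ) (k : ℤ) (hk : (n:ℤ) < k) :
    binPMF n ε k = 0 := by
  unfold binPMF
  rw [if_neg]
  rintro ⟨-, -, h⟩
  omega

lemma binPMF_neg (n : ℕ) (ε : ℝ) (k : ℤ) : binPMF n ε k = binPMF n (-ε) (-k) := by
  unfold binPMF
  by_cases h : ((n : ℤ) + k) % 2 = 0 ∧ -(n : ℤ) ≤ k ∧ k ≤ (n : ℤ)
  · have h' : ((n : ℤ) + -k) % 2 = 0 ∧ -(n : ℤ) ≤ -k ∧ -k ≤ (n : ℤ) := by omega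
    rw [if_pos h, if_pos h']
    have e1 : (((n:ℤ) + -k)/2).toNat = (((n:ℤ) - k)/2).toNat := by omega
    have e2 : (((n:ℤ) - -k)/2).toNat = (((n:ℤ) + k)/2).toNat := by omega
    have e3 : (((n:ℤ) - k)/2).toNat = n - (((n:ℤ) + k)/2).toNat := by omega
    have e4 : (((n:ℤ) + k)/2).toNat ≤ n := by omega
    rw [e1, e2, e3, Nat.choose_symm e4]
    ring_nf
  · have h' : ¬(((n : ℤ) + -k) % 2 = 0 ∧ -(n : ℤ) ≤ -k ∧ -k ≤ (n : ℤ)) := by omega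
    rw [if_neg h, if_neg h']

noncomputable def binTail (n : ℕ) (ε : ℝ) (k : ℤ) : ℝ :=
  ∑ t ∈ Finset.Icc k (n : ℤ), binPMF n ε t


lemma cb_sq (ν : ℕ) : ((Nat.centralBinom ν : ℝ))^2 * (3*ν+1) ≤ ((4:ℝ)^ν)^2 := by
  induction ν with
  | zero => simp [Nat.centralBinom]
  | succ ν ih =>
    have key : ((ν:ℝ)+1) * (Nat.centralBinom (ν+1)) = 2 * (2*(ν:ℝ)+1) * Nat.centralBinom ν := by
      exact_mod_cast congrArg (Nat.cast : ℕ → ℝ) (Nat.succ_mul_centralBinom_succ ν)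
    set B := (Nat.centralBinom ν : ℝ) with hB
    set C := (Nat.centralBinom (ν+1) : ℝ) with hC
    have hC2 : ((ν:ℝ)+1)^2 * C^2 = 4*(2*(ν:ℝ)+1)^2*B^2 := by
      have := congrArg (fun x : ℝ => x^2) key
      nlinarith [this]
    have step1 : 4*(2*(ν:ℝ)+1)^2*(3*(ν:ℝ)+4) ≤ 16*((ν:ℝ)+1)^2*(3*(ν:ℝ)+1) := by
      nlinarith [Nat.cast_nonneg (α := ℝ) ν]
    have step2 : 4*(2*(ν:ℝ)+1)^2*(3*(ν:ℝ)+4)*B^2 ≤ 16*((ν:ℝ)+1)^2*(3*(ν:ℝ)+1)*B^2 :=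
      mul_le_mul_of_nonneg_right step1 (sq_nonneg B)
    have step3 : 16*((ν:ℝ)+1)^2*(B^2*(3*(ν:ℝ)+1)) ≤ 16*((ν:ℝ)+1)^2*((4:ℝ)^ν)^2 := by
      apply mul_le_mul_of_nonneg_left ih
      positivity
    have goal' : ((ν:ℝ)+1)^2 * (C^2 * (3*((ν:ℝ)+1)+1)) ≤ ((ν:ℝ)+1)^2 * (((4:ℝ)^(ν+1))^2) := by
      have e : ((ν:ℝ)+1)^2 * (C^2 * (3*((ν:ℝ)+1)+1)) = 4*(2*(ν:ℝ)+1)^2*(3*(ν:ℝ)+4)*B^2 := by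
        nlinarith [hC2]
      rw [e]
      calc 4*(2*(ν:ℝ)+1)^2*(3*(ν:ℝ)+4)*B^2 ≤ 16*((ν:ℝ)+1)^2*(3*(ν:ℝ)+1)*B^2 := step2
        _ = 16*((ν:ℝ)+1)^2*(B^2*(3*(ν:ℝ)+1)) := by ring
        _ ≤ 16*((ν:ℝ)+1)^2*((4:ℝ)^ν)^2 := step3
        _ = ((ν:ℝ)+1)^2 * (((4:ℝ)^(ν+1))^2) := by ring
    have hpos : (0:ℝ) < ((ν:ℝ)+1)^2 := by positivity
    have := le_of_mul_le_mul_left goal' hpos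
    push_cast
    linarith [this]



lemma central_sq (n : ℕ) : ((n.choose (n/2) : ℝ))^2 * (3*n+2) ≤ 2 * ((2:ℝ)^n)^2 := by
  rcases Nat.even_or_odd n with ⟨ν, hν⟩ | ⟨ν, hν⟩
  · subst hν
    have h2 : (ν + ν)/2 = ν := by omega
    rw [h2]
    have := cb_sq ν
    have e : (Nat.centralBinom ν : ℝ) = ((ν+ν).choose ν : ℝ) := by
      rw [Nat.centralBinom]; norm_num [two_mul]
    rw [e] at this
    have e2 : ((2:ℝ)^(ν+ν))^2 = (((4:ℝ)^ν))^2 := by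
      rw [show (4:ℝ) = 2^2 by norm_num, ← pow_mul, ← pow_mul, ← pow_mul]; ring_nf
    rw [e2]
    push_cast at this ⊢
    nlinarith [sq_nonneg (((ν+ν).choose ν : ℝ))]
  · subst hν
    have h2 : (2*ν + 1)/2 = ν := by omega
    rw [h2]
    have hdouble : Nat.centralBinom (ν+1) = 2 * (2*ν+1).choose ν := by
      rw [Nat.centralBinom]
      have e1 : 2*(ν+1) = (2*ν+1) + 1 := by ring
      rw [e1, Nat.choose_succ_succ']
      have e2 : (2*ν+1).choose (ν+1) = (2*ν+1).choose ν := by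
        rw [← Nat.choose_symm (by omega : ν + 1 ≤ 2*ν+1)]
        congr 1; omega
      rw [e2]; ring
    have := cb_sq (ν+1)
    rw [hdouble] at this
    push_cast at this ⊢
    have e4 : ((4:ℝ)^(ν+1))^2 = 4 * ((2:ℝ)^(2*ν+1))^2 := by
      rw [show (4:ℝ) = 2^2 by norm_num, ← pow_mul, ← pow_mul, ← pow_mul]; ring_nf
    rw [e4] at this
    nlinarith [sq_nonneg (((2*ν+1).choose ν : ℝ)), pow_pos (by norm_num : (0:ℝ) < 2) (2*ν+1)]


lemma choose_ratio (n c : ℕ) (hc : c = n/2) (hc1 : 1 ≤ c) (j : ℕ) :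
    (n.choose (c+j) : ℝ) ≤ (n.choose c : ℝ) * Real.exp (-((j:ℝ)*((j:ℝ)-1))/(c+j)) := by
  induction j with
  | zero => simp
  | succ j ih =>
    have hn2c : n ≤ 2*c + 1 := by omega
    have hden : (0:ℝ) < (c:ℝ)+(j:ℝ)+1 := by positivity
    have hden0 : (0:ℝ) < (c:ℝ)+(j:ℝ) := by
      have : (1:ℝ) ≤ (c:ℝ) := by exact_mod_cast hc1
      linarith [Nat.cast_nonneg (α := ℝ) j]
    -- ratio identity
    have key : (n.choose (c+j+1) : ℝ) * ((c:ℝ)+(j:ℝ)+1) = (n.choose (c+j) : ℝ) * ((n - (c+j) : ℕ) : ℝ) := by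
      exact_mod_cast congrArg (Nat.cast : ℕ → ℝ) (Nat.choose_succ_right_eq n (c+j))
    -- factor bound
    have hfac : (((n - (c+j) : ℕ)) : ℝ) ≤ ((c:ℝ)+(j:ℝ)+1) * Real.exp (-(2*(j:ℝ))/((c:ℝ)+(j:ℝ)+1)) := by
      have hexp : 1 + (-(2*(j:ℝ))/((c:ℝ)+(j:ℝ)+1)) ≤ Real.exp (-(2*(j:ℝ))/((c:ℝ)+(j:ℝ)+1)) := by
        linarith [Real.add_one_le_exp (-(2*(j:ℝ))/((c:ℝ)+(j:ℝ)+1))]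
      have h1 : ((c:ℝ)+(j:ℝ)+1) * (1 + (-(2*(j:ℝ))/((c:ℝ)+(j:ℝ)+1))) = (c:ℝ)+1-(j:ℝ) := by
        field_simp
        ring
      rcases le_or_gt j c with hjc | hjc
      · have hnat : (n - (c+j) : ℕ) ≤ c + 1 - j := by omega
        have : (((n - (c+j) : ℕ)) : ℝ) ≤ ((c + 1 - j : ℕ) : ℝ) := by exact_mod_cast hnat
        have hcast : ((c + 1 - j : ℕ) : ℝ) = (c:ℝ)+1-(j:ℝ) := by
          have : j ≤ c + 1 := by omega
          push_cast [this]
          ring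
        calc (((n - (c+j) : ℕ)) : ℝ) ≤ (c:ℝ)+1-(j:ℝ) := by rw [← hcast]; exact_mod_cast hnat
          _ = ((c:ℝ)+(j:ℝ)+1) * (1 + (-(2*(j:ℝ))/((c:ℝ)+(j:ℝ)+1))) := h1.symm
          _ ≤ _ := by
            apply mul_le_mul_of_nonneg_left hexp (le_of_lt hden)
      · have hnat : n - (c+j) = 0 := by omega
        rw [hnat]
        simp only [Nat.cast_zero]
        positivity
    -- combine
    have hch : (n.choose (c+j+1) : ℝ) ≤ (n.choose (c+j) : ℝ) * Real.exp (-(2*(j:ℝ))/((c:ℝ)+(j:ℝ)+1)) := by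
      have h2 := mul_le_mul_of_nonneg_left hfac (Nat.cast_nonneg (α := ℝ) (n.choose (c+j)))
      rw [← key] at h2
      refine le_of_mul_le_mul_right ?_ hden
      nlinarith [h2]
    -- exponent arithmetic
    have hexp2 : Real.exp (-((j:ℝ)*((j:ℝ)-1))/((c:ℝ)+(j:ℝ))) * Real.exp (-(2*(j:ℝ))/((c:ℝ)+(j:ℝ)+1))
        ≤ Real.exp (-(((j:ℝ)+1)*(((j:ℝ)+1)-1))/((c:ℝ)+(j:ℝ)+1)) := by
      rw [← Real.exp_add]
      apply Real.exp_le_exp.mpr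
      have hjj : (0:ℝ) ≤ (j:ℝ)*((j:ℝ)-1) := by
        rcases Nat.eq_zero_or_pos j with h | h
        · simp [h]
        · have : (1:ℝ) ≤ (j:ℝ) := by exact_mod_cast h
          nlinarith
      have mono : (j:ℝ)*((j:ℝ)-1)/((c:ℝ)+(j:ℝ)+1) ≤ (j:ℝ)*((j:ℝ)-1)/((c:ℝ)+(j:ℝ)) :=
        div_le_div_of_nonneg_left hjj hden0 (by linarith) |>.trans_eq rfl
      have expand : (((j:ℝ)+1)*(((j:ℝ)+1)-1))/((c:ℝ)+(j:ℝ)+1)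
          = (j:ℝ)*((j:ℝ)-1)/((c:ℝ)+(j:ℝ)+1) + (2*(j:ℝ))/((c:ℝ)+(j:ℝ)+1) := by
        field_simp
        ring
      simp only [neg_div]
      linarith [mono, expand]
    -- put together
    have cast1 : ((c + (j+1) : ℕ) : ℝ) = (c:ℝ)+(j:ℝ)+1 := by push_cast; ring
    have final : (n.choose (c+(j+1)) : ℝ) ≤ (n.choose c : ℝ) * Real.exp (-(((j:ℝ)+1)*(((j:ℝ)+1)-1))/((c:ℝ)+(j:ℝ)+1)) := by
      have e : c + (j+1) = c + j + 1 := by ring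
      rw [e]
      calc (n.choose (c+j+1) : ℝ) ≤ (n.choose (c+j) : ℝ) * Real.exp (-(2*(j:ℝ))/((c:ℝ)+(j:ℝ)+1)) := hch
        _ ≤ ((n.choose c : ℝ) * Real.exp (-((j:ℝ)*((j:ℝ)-1))/((c:ℝ)+(j:ℝ)))) * Real.exp (-(2*(j:ℝ))/((c:ℝ)+(j:ℝ)+1)) := by
            apply mul_le_mul_of_nonneg_right _ (Real.exp_nonneg _)
            have := ih
            push_cast at this ⊢
            exact this
        _ = (n.choose c : ℝ) * (Real.exp (-((j:ℝ)*((j:ℝ)-1))/((c:ℝ)+(j:ℝ))) * Real.exp (-(2*(j:ℝ))/((c:ℝ)+(j:ℝ)+1))) := by ring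
        _ ≤ (n.choose c : ℝ) * Real.exp (-(((j:ℝ)+1)*(((j:ℝ)+1)-1))/((c:ℝ)+(j:ℝ)+1)) := by
            apply mul_le_mul_of_nonneg_left hexp2 (Nat.cast_nonneg _)
    push_cast at final ⊢
    convert final using 4 <;> push_cast <;> ring

lemma exp_tenth : Real.exp (1/10) ≤ 10/9 := by
  have h := Real.add_one_le_exp (-(1/10) : ℝ)
  rw [Real.exp_neg] at h
  have hp := Real.exp_pos ((1:ℝ)/10)
  have hc := mul_inv_cancel₀ (ne_of_gt hp)
  nlinarith [h, hp, hc, mul_le_mul_of_nonneg_right h (le_of_lt hp)]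

lemma Ebound (u b x nn mm jj : ℝ) (hu : 100 ≤ u) (hb0 : 0 ≤ b) (hbu : b ≤ (u^2)⁻¹)
    (hx0 : 0 ≤ x) (hxu : x ≤ u^3) (hnn : nn = u^5) (hmm : mm = (nn+x)/2)
    (hjx : x/2 ≤ jj) (hjj : 0 ≤ jj*(jj-1)) :
    b*x - b^2*((nn-x)/2) - (jj*(jj-1))/mm ≤ 1/10 := by
  have hu0 : (0:ℝ) < u := by linarith
  have hnn0 : (0:ℝ) < nn := by rw [hnn]; positivity
  have hmm0 : (0:ℝ) < mm := by rw [hmm]; positivity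
  have hD : (x^2-2*x)/(2*(nn+x)) ≤ (jj*(jj-1))/mm := by
    have h1 : (x^2-2*x)/4 ≤ jj*(jj-1) := by
      rcases le_or_gt x 2 with hx2 | hx2
      · nlinarith
      · nlinarith [mul_nonneg (by linarith : (0:ℝ) ≤ jj - x/2) (by linarith : (0:ℝ) ≤ jj + x/2 - 1)]
    calc (x^2-2*x)/(2*(nn+x)) = ((x^2-2*x)/4)/mm := by
          rw [hmm]; field_simp; ring
      _ ≤ (jj*(jj-1))/mm := div_le_div_of_nonneg_right h1 (le_of_lt hmm0) |>.trans_eq rfl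
  have key : b*x - b^2*((nn-x)/2) - (x^2-2*x)/(2*(nn+x))
      = -((x-b*nn)^2/(2*nn)) + b^2*x/2 + x*(x^2+2*nn)/(2*nn*(nn+x)) := by
    field_simp
    ring
  have h2 : -((x-b*nn)^2/(2*nn)) ≤ 0 := by
    have : 0 ≤ (x-b*nn)^2/(2*nn) := by positivity
    linarith
  have h3 : b^2*x/2 ≤ 1/(2*u) := by
    have hb2 : b^2 ≤ ((u^2)⁻¹)^2 := pow_le_pow_left₀ hb0 hbu 2
    have e : ((u^2)⁻¹)^2 * u^3 = 1/u := by field_simp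
    have : b^2*x ≤ ((u^2)⁻¹)^2 * u^3 :=
      mul_le_mul hb2 hxu hx0 (by positivity)
    rw [e] at this
    calc b^2*x/2 ≤ (1/u)/2 := by linarith
      _ = 1/(2*u) := by ring
  have h4 : x*(x^2+2*nn)/(2*nn*(nn+x)) ≤ 1/(2*u) + 1/u^2 := by
    have hnum : (0:ℝ) ≤ x*(x^2+2*nn) := by positivity
    have hstep : x*(x^2+2*nn)/(2*nn*(nn+x)) ≤ x*(x^2+2*nn)/(2*nn*nn) := by
      apply div_le_div_of_nonneg_left hnum (by positivity) (by nlinarith)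
    have hsplit : x*(x^2+2*nn)/(2*nn*nn) = x^3/(2*nn^2) + x/nn := by
      field_simp
    have hx3 : x^3 ≤ u^9 := by
      calc x^3 ≤ (u^3)^3 := pow_le_pow_left₀ hx0 hxu 3
        _ = u^9 := by rw [← pow_mul]
    have hb1 : x^3/(2*nn^2) ≤ 1/(2*u) := by
      rw [hnn, div_le_div_iff₀ (by positivity) (by positivity)]
      calc x^3*(2*u) ≤ u^9*(2*u) := mul_le_mul_of_nonneg_right hx3 (by positivity)
        _ = 1*(2*(u^5)^2) := by ring
    have hb2 : x/nn ≤ 1/u^2 := by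
      rw [hnn, div_le_div_iff₀ (by positivity) (by positivity)]
      calc x*u^2 ≤ u^3*u^2 := mul_le_mul_of_nonneg_right hxu (by positivity)
        _ = 1*u^5 := by ring
    calc x*(x^2+2*nn)/(2*nn*(nn+x)) ≤ x*(x^2+2*nn)/(2*nn*nn) := hstep
      _ = x^3/(2*nn^2) + x/nn := hsplit
      _ ≤ 1/(2*u) + 1/u^2 := add_le_add hb1 hb2
  have hfin : 1/(2*u) + (1/(2*u) + 1/u^2) ≤ 1/10 := by
    have e1 : 1/(2*u) ≤ 1/200 := by
      rw [div_le_div_iff₀ (by positivity) (by norm_num)]; linarith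
    have e2 : 1/u^2 ≤ 1/10000 := by
      rw [div_le_div_iff₀ (by positivity) (by norm_num)]; nlinarith
    linarith
  calc b*x - b^2*((nn-x)/2) - (jj*(jj-1))/mm
      ≤ b*x - b^2*((nn-x)/2) - (x^2-2*x)/(2*(nn+x)) := by linarith [hD]
    _ = -((x-b*nn)^2/(2*nn)) + b^2*x/2 + x*(x^2+2*nn)/(2*nn*(nn+x)) := key
    _ ≤ 0 + 1/(2*u) + (1/(2*u) + 1/u^2) := by linarith [h2, h3, h4]
    _ ≤ 1/10 := by linarith [hfin]

lemma central_le (n : ℕ) (hn : 0 < (n:ℝ)) :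
    (n.choose (n/2) : ℝ) ≤ 2^n * Real.sqrt (2/(3*(n:ℝ))) := by
  have hsq := central_sq n
  have h3n : (0:ℝ) < 3*(n:ℝ) := by positivity
  have h1 : ((n.choose (n/2) : ℝ))^2 ≤ ((2:ℝ)^n)^2 * (2/(3*(n:ℝ))) := by
    have h2' : ((n.choose (n/2) : ℝ))^2 * (3*(n:ℝ)) ≤ 2*((2:ℝ)^n)^2 := by
      nlinarith [sq_nonneg ((n.choose (n/2) : ℝ))]
    calc ((n.choose (n/2) : ℝ))^2 = ((n.choose (n/2) : ℝ))^2 * (3*(n:ℝ)) / (3*(n:ℝ)) := by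
          field_simp
      _ ≤ 2*((2:ℝ)^n)^2 / (3*(n:ℝ)) := by gcongr
      _ = ((2:ℝ)^n)^2 * (2/(3*(n:ℝ))) := by ring
  calc (n.choose (n/2) : ℝ) = Real.sqrt (((n.choose (n/2) : ℝ))^2) := by
        rw [Real.sqrt_sq (Nat.cast_nonneg _)]
    _ ≤ Real.sqrt (((2:ℝ)^n)^2 * (2/(3*(n:ℝ)))) := Real.sqrt_le_sqrt h1
    _ = 2^n * Real.sqrt (2/(3*(n:ℝ))) := by
        rw [Real.sqrt_mul (sq_nonneg _), Real.sqrt_sq (by positivity)]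

set_option maxHeartbeats 2000000 in
lemma pmf_le_nonneg (n : ℕ) (hn : 10^10 ≤ n) (ε : ℝ) (hε : ε ∈ Set.Icc (-1:ℝ) 1)
    (hεb : |ε| ≤ (n:ℝ)^(-(2:ℝ)/5)) (t : ℤ) (ht0 : 0 ≤ t)
    (ht : |(t:ℝ)| ≤ (n:ℝ)^((3:ℝ)/5)) :
    binPMF n ε t ≤ 1 / Real.sqrt n := by
  have hn0 : (0:ℝ) ≤ (n:ℝ) := Nat.cast_nonneg n
  have hnpos : (0:ℝ) < (n:ℝ) := by
    have : (0:ℕ) < n := by omega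
    exact_mod_cast this
  unfold binPMF
  split
  case isFalse => positivity
  case isTrue h =>
  obtain ⟨hpar, hlb, hub⟩ := h
  -- natural number setup
  set K : ℕ := t.toNat with hK
  set m : ℕ := (((n:ℤ) + t)/2).toNat with hm
  have hKt : (t:ℤ) = (K:ℤ) := by omega
  have h2m : 2*m = n + K := by omega
  have hmn : m ≤ n := by omega
  have hnm : ((((n:ℤ) - t)/2)).toNat = n - m := by omega
  rw [hnm]
  set c : ℕ := n/2 with hc
  have hc1 : 1 ≤ c := by omega
  have hcm : c ≤ m := by omega
  set j : ℕ := m - c with hj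
  have hcj : c + j = m := by omega
  have h2j1 : K ≤ 2*j := by omega
  have h2j2 : 2*j ≤ K + 1 := by omega
  -- real setup
  set u : ℝ := (n:ℝ)^((1:ℝ)/5) with hu
  have hupos : 0 < u := Real.rpow_pos_of_pos hnpos _
  have hu5 : u^(5:ℕ) = (n:ℝ) := by
    rw [hu, ← Real.rpow_natCast ((n:ℝ)^((1:ℝ)/5)) 5, ← Real.rpow_mul hn0]
    norm_num
  have hX : (n:ℝ)^((3:ℝ)/5) = u^(3:ℕ) := by
    rw [hu, ← Real.rpow_natCast ((n:ℝ)^((1:ℝ)/5)) 3, ← Real.rpow_mul hn0]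
    norm_num
  have hB : (n:ℝ)^(-(2:ℝ)/5) = (u^(2:ℕ))⁻¹ := by
    rw [hu, ← Real.rpow_natCast ((n:ℝ)^((1:ℝ)/5)) 2, ← Real.rpow_mul hn0]
    rw [show -(2:ℝ)/5 = -(2/5) by norm_num, Real.rpow_neg hn0]
    norm_num
  have hu100 : (100:ℝ) ≤ u := by
    have h5 : (100:ℝ)^(5:ℕ) ≤ u^(5:ℕ) := by
      rw [hu5]
      have : ((10:ℕ)^10 : ℝ) ≤ (n:ℝ) := by exact_mod_cast hn
      norm_num at this ⊢
      linarith
    exact le_of_pow_le_pow_left₀ (by norm_num) (le_of_lt hupos) h5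
  set b : ℝ := |ε| with hb
  have hb0 : 0 ≤ b := abs_nonneg _
  have hbu : b ≤ (u^(2:ℕ))⁻¹ := by rw [← hB]; exact hεb
  set x : ℝ := (K:ℝ) with hx
  have hx0 : 0 ≤ x := Nat.cast_nonneg K
  have hxu : x ≤ u^(3:ℕ) := by
    rw [← hX]
    have : |(t:ℝ)| = x := by
      rw [abs_of_nonneg (by exact_mod_cast ht0), hx]
      exact_mod_cast hKt
    linarith [ht]
  have hmr : (m:ℝ) = ((n:ℝ) + x)/2 := by
    have : (2*m : ℝ) = (n:ℝ) + x := by rw [hx]; exact_mod_cast h2m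
    linarith
  have hnmr : ((n - m : ℕ):ℝ) = ((n:ℝ) - x)/2 := by
    have h1 : ((n - m : ℕ):ℝ) = (n:ℝ) - (m:ℝ) := by
      have := hmn; push_cast [this]; ring
    rw [h1, hmr]; ring
  have he1 : (0:ℝ) ≤ 1 + ε := by linarith [hε.1]
  have he2 : (0:ℝ) ≤ 1 - ε := by linarith [hε.2]
  -- Step A : power bound
  have hmsplit : m = (n - m) + K := by omega
  have hpowA : ((1+ε)/2)^m * ((1-ε)/2)^(n-m)
      ≤ Real.exp (b*x - b^2*(((n:ℝ)-x)/2)) / 2^n := by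
    have e0 : ((1+ε)/2)^m * ((1-ε)/2)^(n-m) = ((1+ε)^m * (1-ε)^(n-m)) / 2^n := by
      rw [div_pow, div_pow, div_mul_div_comm, ← pow_add]
      congr 2
      omega
    rw [e0]
    apply div_le_div_of_nonneg_right ?_ (by positivity) |>.trans_eq rfl
    have ha : (1+ε)^m * (1-ε)^(n-m) = (1-ε^2)^(n-m) * (1+ε)^K := by
      have hsplit2 : (1+ε)^m = (1+ε)^(n-m) * (1+ε)^K := by rw [← pow_add, ← hmsplit]
      rw [show (1:ℝ)-ε^2 = (1+ε)*(1-ε) by ring, mul_pow, hsplit2]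
      ring
    rw [ha]
    have h12 : (1 - ε^2) = 1 - b^2 := by rw [hb, sq_abs]
    have base : (0:ℝ) ≤ 1 - ε^2 := by nlinarith
    have h3 : (1-ε^2)^(n-m) ≤ Real.exp (-(b^2) * ((n-m:ℕ):ℝ)) := by
      have hle : 1 - ε^2 ≤ Real.exp (-(b^2)) := by
        rw [h12]; linarith [Real.add_one_le_exp (-(b^2))]
      calc (1-ε^2)^(n-m) ≤ (Real.exp (-(b^2)))^(n-m) := pow_le_pow_left₀ base hle _
        _ = Real.exp (-(b^2) * ((n-m:ℕ):ℝ)) := by rw [← Real.exp_nat_mul]; ring_nf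
    have h4 : (1+ε)^K ≤ Real.exp (b * x) := by
      have hbe : 1+ε ≤ Real.exp b := by
        have h := Real.add_one_le_exp b
        have h2 : ε ≤ b := le_abs_self ε
        linarith
      calc (1+ε)^K ≤ (Real.exp b)^K := pow_le_pow_left₀ he1 hbe K
        _ = Real.exp (b*x) := by rw [hx, ← Real.exp_nat_mul]; ring_nf
    calc (1-ε^2)^(n-m) * (1+ε)^K
        ≤ Real.exp (-(b^2) * ((n-m:ℕ):ℝ)) * Real.exp (b*x) :=
          mul_le_mul h3 h4 (pow_nonneg he1 K) (Real.exp_nonneg _)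
      _ = Real.exp (b*x - b^2*(((n:ℝ)-x)/2)) := by
          rw [← Real.exp_add, hnmr]; ring_nf
  -- Step B : choose bound
  have hchoose : (n.choose m : ℝ) ≤ 2^n * Real.sqrt (2/(3*(n:ℝ))) * Real.exp (-((j:ℝ)*((j:ℝ)-1))/(m:ℝ)) := by
    have hr := choose_ratio n c rfl hc1 j
    rw [hcj] at hr
    have hcjr : ((c:ℝ) + (j:ℝ)) = (m:ℝ) := by exact_mod_cast congrArg (Nat.cast : ℕ → ℝ) hcj
    rw [hcjr] at hr
    have hcent : (n.choose c : ℝ) ≤ 2^n * Real.sqrt (2/(3*(n:ℝ))) := by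
      rw [hc]
      exact central_le n hnpos
    calc (n.choose m : ℝ) ≤ (n.choose c : ℝ) * Real.exp (-((j:ℝ)*((j:ℝ)-1))/(m:ℝ)) := hr
      _ ≤ 2^n * Real.sqrt (2/(3*(n:ℝ))) * Real.exp (-((j:ℝ)*((j:ℝ)-1))/(m:ℝ)) :=
          mul_le_mul_of_nonneg_right hcent (Real.exp_nonneg _)
  -- Exponent bound
  have hEbound : b*x - b^2*(((n:ℝ)-x)/2) - ((j:ℝ)*((j:ℝ)-1))/(m:ℝ) ≤ 1/10 := by
    apply Ebound u b x (n:ℝ) (m:ℝ) (j:ℝ) hu100 hb0 hbu hx0 hxu hu5.symm hmr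
    · rw [hx]
      have : (K:ℝ) ≤ 2*(j:ℝ) := by exact_mod_cast h2j1
      linarith
    · rcases Nat.eq_zero_or_pos j with hj0 | hj0
      · simp [hj0]
      · have h1j : (1:ℝ) ≤ (j:ℝ) := Nat.one_le_cast.mpr hj0
        nlinarith [h1j, Nat.cast_nonneg (α := ℝ) j]
  -- Assemble
  have h2npos : (0:ℝ) < (2:ℝ)^n := by positivity
  have hsq0 : (0:ℝ) ≤ Real.sqrt (2/(3*(n:ℝ))) := Real.sqrt_nonneg _
  have hassemble : (n.choose m : ℝ) * ((1+ε)/2)^m * ((1-ε)/2)^(n-m)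
      ≤ Real.sqrt (2/(3*(n:ℝ))) * Real.exp (b*x - b^2*(((n:ℝ)-x)/2) - ((j:ℝ)*((j:ℝ)-1))/(m:ℝ)) := by
    have hp0 : (0:ℝ) ≤ ((1+ε)/2)^m * ((1-ε)/2)^(n-m) := by
      apply mul_nonneg (pow_nonneg (by linarith) m) (pow_nonneg (by linarith) (n-m))
    calc (n.choose m : ℝ) * ((1+ε)/2)^m * ((1-ε)/2)^(n-m)
        = (n.choose m : ℝ) * (((1+ε)/2)^m * ((1-ε)/2)^(n-m)) := by ring
      _ ≤ (2^n * Real.sqrt (2/(3*(n:ℝ))) * Real.exp (-((j:ℝ)*((j:ℝ)-1))/(m:ℝ)))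
            * (Real.exp (b*x - b^2*(((n:ℝ)-x)/2)) / 2^n) := by
          apply mul_le_mul hchoose hpowA hp0
          positivity
      _ = Real.sqrt (2/(3*(n:ℝ))) *
            (Real.exp (-((j:ℝ)*((j:ℝ)-1))/(m:ℝ)) * Real.exp (b*x - b^2*(((n:ℝ)-x)/2))) := by
          field_simp
      _ = Real.sqrt (2/(3*(n:ℝ))) * Real.exp (b*x - b^2*(((n:ℝ)-x)/2) - ((j:ℝ)*((j:ℝ)-1))/(m:ℝ)) := by
          rw [← Real.exp_add]
          congr 1
          rw [neg_div]
          ring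
  have hlast : Real.sqrt (2/(3*(n:ℝ))) * Real.exp (b*x - b^2*(((n:ℝ)-x)/2) - ((j:ℝ)*((j:ℝ)-1))/(m:ℝ))
      ≤ 1 / Real.sqrt n := by
    have hexpb : Real.exp (b*x - b^2*(((n:ℝ)-x)/2) - ((j:ℝ)*((j:ℝ)-1))/(m:ℝ)) ≤ 10/9 :=
      le_trans (Real.exp_le_exp.mpr hEbound) exp_tenth
    have step1 : Real.sqrt (2/(3*(n:ℝ))) * Real.exp (b*x - b^2*(((n:ℝ)-x)/2) - ((j:ℝ)*((j:ℝ)-1))/(m:ℝ))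
        ≤ Real.sqrt (2/(3*(n:ℝ))) * (10/9) :=
      mul_le_mul_of_nonneg_left hexpb hsq0
    have step2 : Real.sqrt (2/(3*(n:ℝ))) * (10/9) ≤ 1 / Real.sqrt n := by
      have e1 : (10:ℝ)/9 = Real.sqrt (100/81) := by
        rw [show (100:ℝ)/81 = (10/9)^2 by norm_num, Real.sqrt_sq (by norm_num)]
      have e2 : Real.sqrt (2/(3*(n:ℝ))) * Real.sqrt (100/81) = Real.sqrt (2/(3*(n:ℝ)) * (100/81)) := by
        rw [← Real.sqrt_mul (by positivity)]
      have e3 : 2/(3*(n:ℝ)) * (100/81) ≤ 1/(n:ℝ) := by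
        rw [div_mul_div_comm, div_le_div_iff₀ (by positivity) hnpos]
        nlinarith [hnpos]
      have e4 : Real.sqrt (1/(n:ℝ)) = 1 / Real.sqrt n := by
        rw [one_div, one_div, Real.sqrt_inv]
      rw [e1, e2, ← e4]
      exact Real.sqrt_le_sqrt e3
    exact le_trans step1 step2
  exact le_trans hassemble hlast

lemma pmf_le (n : ℕ) (hn : 10^10 ≤ n) (ε : ℝ) (hε : ε ∈ Set.Icc (-1:ℝ) 1)
    (hεb : |ε| ≤ (n:ℝ)^(-(2:ℝ)/5)) (t : ℤ)
    (ht : |(t:ℝ)| ≤ (n:ℝ)^((3:ℝ)/5)) :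
    binPMF n ε t ≤ 1 / Real.sqrt n := by
  rcases le_or_gt 0 t with ht0 | ht0
  · exact pmf_le_nonneg n hn ε hε hεb t ht0 ht
  · rw [binPMF_neg]
    apply pmf_le_nonneg n hn (-ε) _ _ (-t) (by omega)
    · push_cast
      rwa [abs_neg]
    · constructor <;> [linarith [hε.2]; linarith [hε.1]]
    · rwa [abs_neg]

lemma tail_sub (n : ℕ) (ε : ℝ) (k k' : ℤ) (h : k ≤ k') :
    binTail n ε k - binTail n ε k' = ∑ t ∈ Finset.Ico k k', binPMF n ε t := by
  set M := max ((n:ℤ)+1) k' with hM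
  have hM1 : (n:ℤ)+1 ≤ M := le_max_left _ _
  have hk'M : k' ≤ M := le_max_right _ _
  have ext : ∀ a : ℤ, binTail n ε a = ∑ t ∈ Finset.Ico a M, binPMF n ε t := by
    intro a
    have hIccIco : Finset.Icc a (n:ℤ) = Finset.Ico a ((n:ℤ)+1) := by
      ext y
      simp only [Finset.mem_Icc, Finset.mem_Ico]
      omega
    rw [binTail, hIccIco]
    apply Finset.sum_subset (Finset.Ico_subset_Ico_right hM1)
    intro x hx hx2
    simp only [Finset.mem_Ico] at hx hx2
    apply binPMF_zero_of_gt
    omega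
  rw [ext k, ext k', ← Finset.Ico_union_Ico_eq_Ico h hk'M,
    Finset.sum_union (Finset.Ico_disjoint_Ico_consecutive k k' M)]
  ring

lemma main_le (n : ℕ) (hn : 10^10 ≤ n) (k k' : ℤ) (hkk : k ≤ k') (ε : ℝ)
    (hε : ε ∈ Set.Icc (-1 : ℝ) 1)
    (hk : |(k : ℝ)| ≤ (n : ℝ) ^ ((3 : ℝ) / 5)) (hk' : |(k' : ℝ)| ≤ (n : ℝ) ^ ((3 : ℝ) / 5))
    (hεb : |ε| ≤ (n : ℝ) ^ (-(2 : ℝ) / 5)) :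
    |binTail n ε k - binTail n ε k'| ≤ |(k : ℝ) - (k' : ℝ)| / Real.sqrt n := by
  rw [tail_sub n ε k k' hkk]
  have hnonneg : ∀ t ∈ Finset.Ico k k', 0 ≤ binPMF n ε t :=
    fun t _ => binPMF_nonneg n ε hε t
  rw [abs_of_nonneg (Finset.sum_nonneg hnonneg)]
  have hbound : ∀ t ∈ Finset.Ico k k', binPMF n ε t ≤ 1 / Real.sqrt n := by
    intro t htmem
    simp only [Finset.mem_Ico] at htmem
    apply pmf_le n hn ε hε hεb t
    have h1 : ((k:ℝ)) ≤ (t:ℝ) := by exact_mod_cast htmem.1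
    have h2 : ((t:ℝ)) ≤ (k':ℝ) := by
      have : t ≤ k' := le_of_lt htmem.2
      exact_mod_cast this
    rw [abs_le]
    constructor
    · have := abs_le.mp hk
      linarith [this.1]
    · have := abs_le.mp hk'
      linarith [this.2]
  calc (∑ t ∈ Finset.Ico k k', binPMF n ε t)
      ≤ (Finset.Ico k k').card • (1 / Real.sqrt n) := Finset.sum_le_card_nsmul _ _ _ hbound
    _ = ((Finset.Ico k k').card : ℝ) * (1 / Real.sqrt n) := by rw [nsmul_eq_mul]
    _ = |(k : ℝ) - (k' : ℝ)| / Real.sqrt n := by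
        rw [Int.card_Ico]
        have h1 : (((k' - k).toNat : ℤ) : ℝ) = (k':ℝ) - (k:ℝ) := by
          have : ((k' - k).toNat : ℤ) = k' - k := by omega
          rw [this]; push_cast; ring
        have h2 : |(k : ℝ) - (k' : ℝ)| = (k':ℝ) - (k:ℝ) := by
          rw [abs_sub_comm, abs_of_nonneg (by exact_mod_cast sub_nonneg.mpr hkk)]
        rw [h2, ← h1]
        push_cast
        ring

theorem stmt_4 :
    ∃ N0 : ℕ, ∀ n : ℕ, N0 ≤ n → ∀ k k' : ℤ, ∀ ε : ℝ, ε ∈ Set.Icc (-1 : ℝ) 1 →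
      |(k : ℝ)| ≤ (n : ℝ) ^ ((3 : ℝ) / 5) → |(k' : ℝ)| ≤ (n : ℝ) ^ ((3 : ℝ) / 5) →
      |ε| ≤ (n : ℝ) ^ (-(2 : ℝ) / 5) →
      |binTail n ε k - binTail n ε k'| ≤ |(k : ℝ) - (k' : ℝ)| / Real.sqrt n := by
  refine ⟨10^10, fun n hn k k' ε hε hk hk' hεb => ?_⟩
  rcases le_total k k' with h | h
  · exact main_le n hn k k' h ε hε hk hk' hεb
  · rw [abs_sub_comm, abs_sub_comm ((k:ℝ))]
    exact main_le n hn k' k h ε hε hk' hk hεb
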